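/- arXiv:2103.06436 — 2 statements merged into one kernel-verified Lean document; each statement's English description precedes it below -/
import Mathlib

section
/- For 0 ≤ w < 1, with G(w) := 1 + w³ + (1−w²)K(w) − (1+w²)E(w), one has G′(w) ≤ 0, i.e., G is nonincreasing on [0,1). -/
noncomputable def ellK (w : ℝ) : ℝ := ∫ θ in (0:ℝ)..(Real.pi/2), 1 / Real.sqrt (1 - w^2 * Real.sin θ ^ 2)

noncomputable def ellE (w : ℝ) : ℝ := ∫ θ in (0:ℝ)..(Real.pi/2), Real.sqrt (1 - w^2 * Real.sin θ ^ 2)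

noncomputable def Gfun (w : ℝ) : ℝ := 1 + w^3 + (1 - w^2) * ellK w - (1 + w^2) * ellE w

open Real intervalIntegral MeasureTheory Set Metric

noncomputable def uu (x θ : ℝ) : ℝ := 1 - x^2 * Real.sin θ^2

lemma uu_pos {x : ℝ} (hx : x^2 < 1) (θ : ℝ) : 0 < uu x θ := by
  have h1 : Real.sin θ^2 ≤ 1 := Real.sin_sq_le_one θ
  have h0 : (0:ℝ) ≤ x^2 := sq_nonneg x
  unfold uu; nlinarith

lemma cont_uu (x : ℝ) : Continuous (uu x) := by unfold uu; fun_prop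

lemma sqrt_uu_pos {x : ℝ} (hx : x^2 < 1) (θ : ℝ) : 0 < Real.sqrt (uu x θ) :=
  Real.sqrt_pos.2 (uu_pos hx θ)

noncomputable def Df (x θ : ℝ) : ℝ :=
  x * ((1 - x^2) * Real.sin θ^2 / Real.sqrt (uu x θ)^3
      + (1 + x^2) * Real.sin θ^2 / Real.sqrt (uu x θ)
      - 2 / Real.sqrt (uu x θ) - 2 * Real.sqrt (uu x θ))

noncomputable def Ff (x θ : ℝ) : ℝ :=
  (1 - x^2) * (1 / Real.sqrt (uu x θ)) - (1 + x^2) * Real.sqrt (uu x θ)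

lemma hasDerivAt_uu (x θ : ℝ) :
    HasDerivAt (fun y => uu y θ) (-(2 * x * Real.sin θ^2)) x := by
  have := ((hasDerivAt_pow 2 x).mul_const (Real.sin θ^2)).const_sub 1
  simpa [uu, mul_assoc, mul_comm, mul_left_comm] using this

lemma hasDerivAt_sqrt_uu {x : ℝ} (hx : x^2 < 1) (θ : ℝ) :
    HasDerivAt (fun y => Real.sqrt (uu y θ))
      (-(x * Real.sin θ^2) / Real.sqrt (uu x θ)) x := by
  have h := (Real.hasDerivAt_sqrt (uu_pos hx θ).ne').comp x (hasDerivAt_uu x θ)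
  refine h.congr_deriv ?_
  have ha := (sqrt_uu_pos hx θ).ne'
  field_simp

lemma hasDerivAt_Ff {x : ℝ} (hx : x^2 < 1) (θ : ℝ) :
    HasDerivAt (fun y => Ff y θ) (Df x θ) x := by
  have ha := (sqrt_uu_pos hx θ).ne'
  have hsq := hasDerivAt_sqrt_uu hx θ
  have hinv := hsq.inv ha
  have h1 : HasDerivAt (fun y : ℝ => 1 - y^2) (-(2*x)) x := by
    simpa using (hasDerivAt_pow 2 x).const_sub 1
  have h2 : HasDerivAt (fun y : ℝ => 1 + y^2) (2*x) x := by
    simpa using (hasDerivAt_pow 2 x).const_add 1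
  have h := (h1.mul hinv).sub (h2.mul hsq)
  have hE : ∀ y, Ff y θ = (1 - y^2) * (Real.sqrt (uu y θ))⁻¹ - (1 + y^2) * Real.sqrt (uu y θ) := by
    intro y; rw [Ff, one_div]
  rw [show (fun y => Ff y θ) = fun y => (1 - y^2) * (Real.sqrt (uu y θ))⁻¹ - (1 + y^2) * Real.sqrt (uu y θ) from funext hE]
  refine h.congr_deriv ?_
  rw [Df, Pi.inv_apply]
  field_simp
  ring

noncomputable def Hh (x θ : ℝ) : ℝ := Real.sin θ * Real.cos θ / Real.sqrt (uu x θ)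

noncomputable def DH (x θ : ℝ) : ℝ :=
  (Real.cos θ^2 - Real.sin θ^2) / Real.sqrt (uu x θ)
    + x^2 * Real.sin θ^2 * Real.cos θ^2 / Real.sqrt (uu x θ)^3

lemma hasDerivAt_uu_theta {x : ℝ} (θ : ℝ) :
    HasDerivAt (fun t => uu x t) (-(x^2 * (2 * Real.sin θ * Real.cos θ))) θ := by
  have h1 : HasDerivAt (fun t => Real.sin t ^ 2) (2 * Real.sin θ * Real.cos θ) θ := by
    have h := ((Real.hasDerivAt_sin θ).pow 2 : HasDerivAt (fun t => Real.sin t ^ 2) _ θ)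
    exact h.congr_deriv (by ring)
  simpa [uu, mul_comm, mul_assoc, mul_left_comm] using (h1.const_mul (x^2)).const_sub 1

lemma hasDerivAt_Hh {x : ℝ} (hx : x^2 < 1) (θ : ℝ) :
    HasDerivAt (fun t => Hh x t) (DH x θ) θ := by
  have ha := (sqrt_uu_pos hx θ).ne'
  have hu := (uu_pos hx θ).ne'
  have hsq : HasDerivAt (fun t => Real.sqrt (uu x t))
      (-(x^2 * Real.sin θ * Real.cos θ) / Real.sqrt (uu x θ)) θ := by
    have h := (Real.hasDerivAt_sqrt hu).comp θ (hasDerivAt_uu_theta (x := x) θ)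
    refine h.congr_deriv ?_
    field_simp
  have hnum : HasDerivAt (fun t => Real.sin t * Real.cos t)
      (Real.cos θ^2 - Real.sin θ^2) θ := by
    have := (Real.hasDerivAt_sin θ).mul (Real.hasDerivAt_cos θ)
    refine this.congr_deriv ?_; ring
  have h := hnum.div hsq ha
  refine h.congr_deriv ?_
  rw [DH]
  field_simp
  ring

lemma Df_eq {x : ℝ} (hx : x^2 < 1) (θ : ℝ) :
    Df x θ = -3 * x * Real.sqrt (uu x θ) - x * DH x θ := by
  have ha := (sqrt_uu_pos hx θ).ne'
  have h2 : Real.sqrt (uu x θ)^2 = 1 - x^2*Real.sin θ^2 := Real.sq_sqrt (uu_pos hx θ).le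
  have hc : Real.cos θ^2 = 1 - Real.sin θ^2 := Real.cos_sq' θ
  rw [Df, DH, hc]
  set a := Real.sqrt (uu x θ)
  set s := Real.sin θ
  field_simp
  linear_combination (x * (a^2 - s^2)) * h2

lemma aux_bound {δ a s x : ℝ} (hδ : 0 < δ) (hδ1 : δ ≤ 1) (ha : 0 < a) (haδ : δ ≤ a)
    (ha1 : a ≤ 1) (hs0 : 0 ≤ s) (hs : s ≤ 1) (hx2 : x^2 ≤ 1) (hx1 : |x| ≤ 1) :
    |x * ((1 - x^2) * s / a^3 + (1 + x^2) * s / a - 2/a - 2*a)| ≤ 7 / δ^3 := by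
  have hδ3 : (0:ℝ) < δ^3 := by positivity
  have haδ3 : δ^3 ≤ a^3 := pow_le_pow_left₀ hδ.le haδ 3
  have ha3 : (0:ℝ) < a^3 := by positivity
  have hδ2 : δ^3 ≤ δ := by nlinarith [mul_nonneg (mul_nonneg hδ.le (by linarith : (0:ℝ) ≤ 1 - δ)) (by linarith : (0:ℝ) ≤ 1 + δ)]
  have hDδ : 1/δ ≤ 1/δ^3 := one_div_le_one_div_of_le hδ3 hδ2
  have hD1 : (1:ℝ) ≤ 1/δ^3 := by rw [le_div_iff₀ hδ3]; nlinarith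
  have e1 : (1 - x^2) * s / a^3 ≤ 1/δ^3 := div_le_div₀ zero_le_one (by nlinarith) hδ3 haδ3
  have e1' : 0 ≤ (1 - x^2) * s / a^3 := div_nonneg (mul_nonneg (by nlinarith) hs0) ha3.le
  have e2 : (1 + x^2) * s / a ≤ 2 * (1/δ^3) := by
    have h1 : (1 + x^2) * s / a ≤ 2 / δ := div_le_div₀ (by norm_num) (by nlinarith) hδ haδ
    have h2 : (2:ℝ)/δ = 2 * (1/δ) := by ring
    linarith
  have e2' : 0 ≤ (1 + x^2) * s / a := div_nonneg (by nlinarith) ha.le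
  have e3 : 2 / a ≤ 2 * (1/δ^3) := by
    have h1 : 2 / a ≤ 2 / δ := div_le_div₀ (by norm_num) le_rfl hδ haδ
    have h2 : (2:ℝ)/δ = 2 * (1/δ) := by ring
    linarith
  have e3' : 0 ≤ 2 / a := by positivity
  have e4 : 2 * a ≤ 2 * (1/δ^3) := by nlinarith
  have e4' : 0 ≤ 2 * a := by positivity
  have hB : |(1 - x^2) * s / a^3 + (1 + x^2) * s / a - 2/a - 2*a| ≤ 7 * (1/δ^3) := by
    rw [abs_le]; constructor <;> nlinarith
  rw [abs_mul]
  have hmul := mul_le_mul hx1 hB (abs_nonneg _) zero_le_one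
  have h7 : 1 * (7 * (1/δ^3)) = 7 / δ^3 := by ring
  linarith

lemma Df_bound {r x : ℝ} (hr0 : 0 ≤ r) (hr : r < 1) (hx : |x| ≤ r) (θ : ℝ) :
    |Df x θ| ≤ 7 / (1 - r^2)^3 := by
  have habs := abs_le.1 hx
  have hx2 : x^2 ≤ r^2 := by nlinarith [habs.1, habs.2]
  have hx1 : x^2 < 1 := lt_of_le_of_lt hx2 (by nlinarith)
  have hδ : 0 < 1 - r^2 := by nlinarith
  have hδ1 : 1 - r^2 ≤ 1 := by nlinarith
  have ha : 0 < Real.sqrt (uu x θ) := sqrt_uu_pos hx1 θ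
  have hs : Real.sin θ^2 ≤ 1 := Real.sin_sq_le_one θ
  have hs0 : 0 ≤ Real.sin θ^2 := sq_nonneg _
  have haδ : 1 - r^2 ≤ Real.sqrt (uu x θ) :=
    (Real.le_sqrt hδ.le (uu_pos hx1 θ).le).2 (by unfold uu; nlinarith)
  have ha1 : Real.sqrt (uu x θ) ≤ 1 := by
    have h1 : uu x θ ≤ 1 := by unfold uu; nlinarith
    calc Real.sqrt (uu x θ) ≤ Real.sqrt 1 := Real.sqrt_le_sqrt h1
    _ = 1 := Real.sqrt_one
  rw [Df]
  exact aux_bound hδ hδ1 ha haδ ha1 hs0 hs hx1.le (le_trans hx hr.le)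

lemma cont_sqrt_uu (x : ℝ) : Continuous (fun θ => Real.sqrt (uu x θ)) :=
  Real.continuous_sqrt.comp (cont_uu x)

lemma cont_Ff {x : ℝ} (hx : x^2 < 1) : Continuous (Ff x) := by
  have h := cont_sqrt_uu x
  have hne : ∀ θ, Real.sqrt (uu x θ) ≠ 0 := fun θ => (sqrt_uu_pos hx θ).ne'
  unfold Ff
  exact (continuous_const.mul (continuous_const.div h hne)).sub (continuous_const.mul h)

lemma cont_Df {x : ℝ} (hx : x^2 < 1) : Continuous (Df x) := by
  have h := cont_sqrt_uu x
  have hne : ∀ θ, Real.sqrt (uu x θ) ≠ 0 := fun θ => (sqrt_uu_pos hx θ).ne'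
  have hne3 : ∀ θ, Real.sqrt (uu x θ)^3 ≠ 0 := fun θ => pow_ne_zero 3 (hne θ)
  unfold Df
  apply continuous_const.mul
  apply Continuous.sub
  apply Continuous.sub
  · exact (((continuous_const.mul ((Real.continuous_sin.pow 2))).div (h.pow 3) hne3)).add
      ((continuous_const.mul ((Real.continuous_sin.pow 2))).div h hne)
  · exact continuous_const.div h hne
  · exact continuous_const.mul h

lemma cont_DH {x : ℝ} (hx : x^2 < 1) : Continuous (DH x) := by
  have h := cont_sqrt_uu x
  have hne : ∀ θ, Real.sqrt (uu x θ) ≠ 0 := fun θ => (sqrt_uu_pos hx θ).ne'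
  have hne3 : ∀ θ, Real.sqrt (uu x θ)^3 ≠ 0 := fun θ => pow_ne_zero 3 (hne θ)
  unfold DH
  exact (((Real.continuous_cos.pow 2).sub (Real.continuous_sin.pow 2)).div h hne).add
    (((continuous_const.mul (Real.continuous_sin.pow 2)).mul (Real.continuous_cos.pow 2)).div (h.pow 3) hne3)

lemma ellE_eq (x : ℝ) : ellE x = ∫ θ in (0:ℝ)..(Real.pi/2), Real.sqrt (uu x θ) := rfl
lemma ellK_eq (x : ℝ) : ellK x = ∫ θ in (0:ℝ)..(Real.pi/2), 1 / Real.sqrt (uu x θ) := rfl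

lemma integral_DH {x : ℝ} (hx : x^2 < 1) :
    ∫ θ in (0:ℝ)..(Real.pi/2), DH x θ = 0 := by
  have h := intervalIntegral.integral_eq_sub_of_hasDerivAt
    (f := Hh x) (f' := DH x) (a := (0:ℝ)) (b := Real.pi/2)
    (fun θ _ => hasDerivAt_Hh hx θ) ((cont_DH hx).intervalIntegrable _ _)
  rw [h]
  simp [Hh]

lemma integral_Df {x : ℝ} (hx : x^2 < 1) :
    ∫ θ in (0:ℝ)..(Real.pi/2), Df x θ = -3 * x * ellE x := by
  have h1 : ∀ θ ∈ Set.uIcc (0:ℝ) (Real.pi/2), Df x θ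
      = (-3 * x) * Real.sqrt (uu x θ) - x * DH x θ := by
    intro θ _; rw [Df_eq hx θ]
  rw [intervalIntegral.integral_congr h1]
  rw [intervalIntegral.integral_sub (f := fun θ => (-3 * x) * Real.sqrt (uu x θ)) (g := fun θ => x * DH x θ)
    ((continuous_const.mul (cont_sqrt_uu x)).intervalIntegrable _ _)
    ((continuous_const.mul (cont_DH hx)).intervalIntegrable _ _),
    intervalIntegral.integral_const_mul, intervalIntegral.integral_const_mul,
    integral_DH hx, ellE_eq]
  ring

lemma integral_Ff {x : ℝ} (hx : x^2 < 1) :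
    ∫ θ in (0:ℝ)..(Real.pi/2), Ff x θ = (1 - x^2) * ellK x - (1 + x^2) * ellE x := by
  have h := cont_sqrt_uu x
  have hne : ∀ θ, Real.sqrt (uu x θ) ≠ 0 := fun θ => (sqrt_uu_pos hx θ).ne'
  rw [show Ff x = fun θ => (1 - x^2) * (1 / Real.sqrt (uu x θ)) - (1 + x^2) * Real.sqrt (uu x θ) from rfl]
  have c1 : Continuous fun θ => (1 - x^2) * (1 / Real.sqrt (uu x θ)) :=
    continuous_const.mul (continuous_const.div h hne)
  have c2 : Continuous fun θ => (1 + x^2) * Real.sqrt (uu x θ) := continuous_const.mul h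
  rw [intervalIntegral.integral_sub
    (c1.intervalIntegrable _ _)
    (c2.intervalIntegrable _ _),
    intervalIntegral.integral_const_mul, intervalIntegral.integral_const_mul,
    ellE_eq, ellK_eq]

lemma one_le_ellE {x : ℝ} (hx : x^2 < 1) : 1 ≤ ellE x := by
  have hmono := intervalIntegral.integral_mono_on (a := (0:ℝ)) (b := Real.pi/2)
    (μ := volume) (f := Real.cos) (g := fun θ => Real.sqrt (uu x θ))
    (by positivity)
    (Real.continuous_cos.intervalIntegrable _ _)
    ((cont_sqrt_uu x).intervalIntegrable _ _)
    (by
      intro θ hθ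
      have hc : 0 ≤ Real.cos θ := Real.cos_nonneg_of_mem_Icc
        ⟨by linarith [hθ.1, Real.pi_pos], hθ.2⟩
      rw [show Real.cos θ = Real.sqrt (Real.cos θ^2) from (Real.sqrt_sq hc).symm]
      apply Real.sqrt_le_sqrt
      rw [Real.cos_sq']
      have := sq_nonneg x
      have := Real.sin_sq_le_one θ
      unfold uu
      nlinarith [sq_nonneg (Real.sin θ)])
  rw [ellE_eq]
  calc (1:ℝ) = ∫ θ in (0:ℝ)..(Real.pi/2), Real.cos θ := by
        rw [_root_.integral_cos]; simp
  _ ≤ _ := hmono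

lemma meas_Ff (x : ℝ) : AEStronglyMeasurable (Ff x) (volume.restrict (Set.uIoc (0:ℝ) (Real.pi/2))) := by
  have m1 : Measurable fun θ => Real.sqrt (uu x θ) := (cont_sqrt_uu x).measurable
  exact ((measurable_const.mul (measurable_const.div m1)).sub
    (measurable_const.mul m1)).aestronglyMeasurable

lemma hasDerivAt_Gfun {w : ℝ} (hw : w ∈ Set.Ico (0:ℝ) 1) :
    HasDerivAt Gfun (3*w^2 - 3*w*ellE w) w := by
  obtain ⟨hw0, hw1⟩ := hw
  have hw2 : w^2 < 1 := by nlinarith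
  set r : ℝ := (1+w)/2 with hrdef
  set ε : ℝ := (1-w)/2 with hεdef
  have hε : 0 < ε := by rw [hεdef]; linarith
  have hr0 : 0 ≤ r := by rw [hrdef]; linarith
  have hr1 : r < 1 := by rw [hrdef]; linarith
  have hball : ∀ x ∈ Metric.ball w ε, |x| ≤ r := by
    intro x hx
    rw [Metric.mem_ball, Real.dist_eq] at hx
    rw [hrdef]
    have := abs_le.1 hx.le
    rw [abs_le]
    constructor <;> [linarith [this.1]; linarith [this.2]]
  have hball2 : ∀ x ∈ Metric.ball w ε, x^2 < 1 := by
    intro x hx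
    have h1 := hball x hx
    have h2 := abs_le.1 h1
    nlinarith
  have key := (intervalIntegral.hasDerivAt_integral_of_dominated_loc_of_deriv_le
    (F := Ff) (F' := Df) (x₀ := w) (a := (0:ℝ)) (b := Real.pi/2) (μ := volume)
    (bound := fun _ => 7 / (1 - r^2)^3) (Metric.ball_mem_nhds w hε)
    (Filter.Eventually.of_forall (fun x => meas_Ff x))
    ((cont_Ff hw2).intervalIntegrable _ _)
    ((cont_Df hw2).aestronglyMeasurable)
    (Filter.Eventually.of_forall (fun θ _ => fun x hx => by
      rw [Real.norm_eq_abs]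
      exact Df_bound hr0 hr1 (hball x hx) θ))
    (intervalIntegrable_const)
    (Filter.Eventually.of_forall (fun θ _ => fun x hx => hasDerivAt_Ff (hball2 x hx) θ))).2
  have hpoly : HasDerivAt (fun x : ℝ => 1 + x^3) (3*w^2) w := by
    simpa using (hasDerivAt_pow 3 w).const_add 1
  have total := hpoly.add key
  have heq : Gfun =ᶠ[nhds w] fun x => (1 + x^3) + ∫ θ in (0:ℝ)..(Real.pi/2), Ff x θ := by
    have hmem : Set.Ioo (-1:ℝ) 1 ∈ nhds w := Ioo_mem_nhds (by linarith) hw1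
    filter_upwards [hmem] with x hx
    have hx2 : x^2 < 1 := by nlinarith [hx.1, hx.2]
    rw [integral_Ff hx2, Gfun]
    ring
  have final := total.congr_of_eventuallyEq heq
  rw [integral_Df hw2] at final
  refine final.congr_deriv ?_
  ring

theorem G_antitone :
    (∀ w ∈ Set.Ico (0:ℝ) 1, deriv Gfun w ≤ 0) ∧ AntitoneOn Gfun (Set.Ico (0:ℝ) 1) := by
  have hderiv : ∀ w ∈ Set.Ico (0:ℝ) 1, deriv Gfun w = 3*w^2 - 3*w*ellE w :=
    fun w hw => (hasDerivAt_Gfun hw).deriv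
  have hle : ∀ w ∈ Set.Ico (0:ℝ) 1, deriv Gfun w ≤ 0 := by
    intro w hw
    rw [hderiv w hw]
    have hw2 : w^2 < 1 := by nlinarith [hw.1, hw.2]
    have hE := one_le_ellE hw2
    nlinarith [hw.1, hw.2]
  refine ⟨hle, ?_⟩
  apply antitoneOn_of_deriv_nonpos (convex_Ico 0 1)
  · intro w hw
    exact ((hasDerivAt_Gfun hw).differentiableAt).continuousAt.continuousWithinAt
  · rw [interior_Ico]
    intro w hw
    exact ((hasDerivAt_Gfun (Set.mem_Ico_of_Ioo hw)).differentiableAt).differentiableWithinAt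
  · rw [interior_Ico]
    intro w hw
    exact hle w (Set.mem_Ico_of_Ioo hw)
end

section
/- Let Γ = PSL₂(ℤ) and w = x + iy in the standard fundamental domain F with y ≥ 2. Then for every γ ∈ Γ with γ ≠ 1, the hyperbolic distance satisfies ρ(w, γw) ≫ min(1, 1/Im(w)), with an absolute implied constant. More precisely, if γ has lower-left entry c ≠ 0 then Im(γw) ≤ 1/2 so ρ(w,γw) ≫ 1, and if c = 0 then γw = w ± b with b ≠ 0 and ρ(w, γw) ≫ 1/Im(w). -/
open UpperHalfPlane

private lemma half_le_arsinh {t : ℝ} (h0 : 0 ≤ t) (h1 : t ≤ 1) :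
    t / 2 ≤ Real.arsinh t := by
  have hsq : (1 : ℝ) ≤ Real.sqrt (1 + t ^ 2) := by
    nlinarith [Real.sq_sqrt (show (0:ℝ) ≤ 1 + t^2 by positivity),
      Real.sqrt_nonneg (1 + t^2)]
  have hlog1 : Real.log (1 + t) ≤ Real.arsinh t := by
    rw [Real.arsinh]
    exact Real.log_le_log (by linarith) (by linarith)
  have h2 : Real.log (1 + t)⁻¹ ≤ (1 + t)⁻¹ - 1 :=
    Real.log_le_sub_one_of_pos (by positivity)
  rw [Real.log_inv] at h2
  have hinv : (1 + t) * (1 + t)⁻¹ = 1 := mul_inv_cancel₀ (by positivity)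
  have h3 : t / 2 ≤ Real.log (1 + t) := by nlinarith
  linarith

private lemma dist_lower_of_translate (w z : ℍ) (b : ℤ) (hb : b ≠ 0)
    (hz : (z : ℂ) = (w : ℂ) + b) (hy : 2 ≤ w.im) :
    1 / (4 * w.im) ≤ dist w z := by
  have hyim : z.im = w.im := by
    have := congrArg Complex.im hz
    simpa [UpperHalfPlane.coe_im] using this
  have hypos : 0 < w.im := w.im_pos
  have hdc : dist (w : ℂ) (z : ℂ) = |(b : ℝ)| := by
    rw [Complex.dist_eq, hz]
    simp
  have hb1 : (1 : ℝ) ≤ |(b : ℝ)| := by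
    rw [← Int.cast_abs]
    exact_mod_cast Int.one_le_abs hb
  rw [UpperHalfPlane.dist_eq, hdc, hyim, Real.sqrt_mul_self hypos.le]
  have hmono : Real.arsinh (1 / (2 * w.im)) ≤ Real.arsinh (|(b : ℝ)| / (2 * w.im)) := by
    rw [Real.arsinh_le_arsinh]
    gcongr
  have hsmall : (1 : ℝ) / (2 * w.im) ≤ 1 := by
    rw [div_le_one (by positivity)]; linarith
  have h := half_le_arsinh (t := 1 / (2 * w.im)) (by positivity) hsmall
  have heq : 1 / (2 * w.im) / 2 = 1 / (4 * w.im) := by ring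
  have hq : (0:ℝ) < 1 / (4 * w.im) := by positivity
  linarith

theorem min_spacing_high :
    ∃ c > 0, ∀ (w : UpperHalfPlane), w ∈ ModularGroup.fd → 2 ≤ w.im →
      ∀ γ : Matrix.SpecialLinearGroup (Fin 2) ℤ, γ ≠ 1 → γ ≠ -1 →
        c * min 1 (1 / w.im) ≤ dist w (γ • w) ∧
        ((γ : Matrix (Fin 2) (Fin 2) ℤ) 1 0 ≠ 0 → (γ • w).im ≤ 1 / 2) ∧
        ((γ : Matrix (Fin 2) (Fin 2) ℤ) 1 0 = 0 →
          ∃ b : ℤ, b ≠ 0 ∧ ((γ • w : UpperHalfPlane) : ℂ) = (w : ℂ) + b) := by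
  refine ⟨1/4, by norm_num, fun w hfd hy γ hγ1 hγm1 => ?_⟩
  have hypos : 0 < w.im := w.im_pos
  have hmin : min 1 (1 / w.im) = 1 / w.im :=
    min_eq_right (by rw [div_le_one hypos]; linarith)
  rw [hmin]
  by_cases hc : (γ : Matrix (Fin 2) (Fin 2) ℤ) 1 0 = 0
  · -- translation case
    have hdet := γ.prop
    rw [Matrix.det_fin_two, hc] at hdet
    simp only [mul_zero, sub_zero] at hdet
    have hb' : ∃ b : ℤ, b ≠ 0 ∧ ((γ • w : UpperHalfPlane) : ℂ) = (w : ℂ) + b := by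
      set n : ℤ := (γ : Matrix (Fin 2) (Fin 2) ℤ) 0 1 with hn
      rcases Int.mul_eq_one_iff_eq_one_or_neg_one.mp hdet with ⟨ha, hd⟩ | ⟨ha, hd⟩
      · have hγT : γ = ModularGroup.T ^ n := by
          ext i j
          rw [ModularGroup.coe_T_zpow]
          fin_cases i <;> fin_cases j <;>
            simp [ha, hd, hc, ← hn]
        have hn0 : n ≠ 0 := by
          intro h
          apply hγ1
          rw [hγT, h, zpow_zero]
        refine ⟨n, hn0, ?_⟩
        rw [hγT, ModularGroup.coe_T_zpow_smul_eq]
      · have hγT : γ = -(ModularGroup.T ^ (-n)) := by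
          ext i j
          have := ModularGroup.coe_T_zpow (-n)
          rw [show ((-(ModularGroup.T ^ (-n)) : Matrix.SpecialLinearGroup (Fin 2) ℤ) :
              Matrix (Fin 2) (Fin 2) ℤ) = -(!![1, -n; 0, 1]) by rw [← this]; rfl]
          fin_cases i <;> fin_cases j <;>
            simp [ha, hd, hc, ← hn]
        have hn0 : -n ≠ 0 := by
          intro h
          apply hγm1
          rw [hγT, h, zpow_zero]
        refine ⟨-n, hn0, ?_⟩
        rw [hγT]
        rw [show (-(ModularGroup.T ^ (-n)) • w : ℍ) = (ModularGroup.T ^ (-n)) • w from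
          ModularGroup.SL_neg_smul _ _]
        rw [ModularGroup.coe_T_zpow_smul_eq]
    obtain ⟨b, hb0, hbeq⟩ := hb'
    refine ⟨?_, fun h => absurd hc h, fun _ => ⟨b, hb0, hbeq⟩⟩
    have hd := dist_lower_of_translate w (γ • w) b hb0 hbeq hy
    calc (1:ℝ)/4 * (1 / w.im) = 1 / (4 * w.im) := by ring
    _ ≤ dist w (γ • w) := hd
  · -- c ≠ 0 case
    have hc2 : (1:ℝ) ≤ (((γ : Matrix (Fin 2) (Fin 2) ℤ) 1 0 : ℝ))^2 := by
      have : (1:ℤ) ≤ ((γ : Matrix (Fin 2) (Fin 2) ℤ) 1 0)^2 := by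
        nlinarith [Int.one_le_abs hc, sq_abs ((γ : Matrix (Fin 2) (Fin 2) ℤ) 1 0)]
      exact_mod_cast this
    have him' : (γ • w).im ≤ 1 / 2 := by
      rw [ModularGroup.im_smul_eq_div_normSq, ModularGroup.denom_apply]
      set cr : ℝ := (((γ : Matrix (Fin 2) (Fin 2) ℤ) 1 0 : ℝ)) with hcr
      set dr : ℝ := (((γ : Matrix (Fin 2) (Fin 2) ℤ) 1 1 : ℝ)) with hdr
      have hns : Complex.normSq ((((γ : Matrix (Fin 2) (Fin 2) ℤ) 1 0 : ℤ) : ℂ) * (w:ℂ) +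
          (((γ : Matrix (Fin 2) (Fin 2) ℤ) 1 1 : ℤ) : ℂ)) =
          (cr * w.re + dr)^2 + (cr * w.im)^2 := by
        simp [Complex.normSq_apply, UpperHalfPlane.coe_re, UpperHalfPlane.coe_im, hcr, hdr]
        ring
      rw [hns]
      have hN : 2 * w.im ≤ (cr * w.re + dr)^2 + (cr * w.im)^2 := by
        nlinarith [sq_nonneg (cr * w.re + dr), hypos, hc2, hy, mul_nonneg (by linarith : (0:ℝ) ≤ cr^2 - 1) (sq_nonneg w.im)]
      rw [div_le_iff₀ (by linarith)]
      linarith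
    refine ⟨?_, fun _ => him', fun h => absurd h hc⟩
    have h1 : |Real.log w.im - Real.log (γ • w).im| ≤ dist w (γ • w) := by
      have := UpperHalfPlane.dist_log_im_le w (γ • w)
      rwa [Real.dist_eq] at this
    have h2 : Real.log 2 ≤ Real.log w.im := Real.log_le_log (by norm_num) hy
    have h3 : Real.log (γ • w).im ≤ Real.log (1/2) :=
      Real.log_le_log (γ • w).im_pos him'
    have hlog2 : (0.6931471803 : ℝ) < Real.log 2 := Real.log_two_gt_d9
    have h4 : Real.log (1/2) = -Real.log 2 := by
      rw [one_div, Real.log_inv]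
    have h5 : 1 ≤ dist w (γ • w) := by
      have hz : 2 * Real.log 2 ≤ Real.log w.im - Real.log (γ • w).im := by
        rw [h4] at h3; linarith
      have := le_trans hz (le_abs_self _)
      linarith
    have h6 : 1 / w.im ≤ 1/2 := by
      rw [div_le_div_iff₀ hypos (by norm_num)]; linarith
    linarith
end
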